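/- arXiv:0712.3136 — 3 statements merged into one kernel-verified Lean document; each statement's English description precedes it below -/
import Mathlib

section
/- For r ∈ (0,1) and all real s₁, s₂, one has (s₁ - s₂)(s₁^{⟨r⟩} - s₂^{⟨r⟩}) ≥ r·|s₁ - s₂|²·(|s₁| ∨ |s₂|)^{r-1}, where s^{⟨r⟩} := |s|^{r-1}·s denotes the signed r-th power (and the right-hand side is interpreted as 0 when s₁ = s₂ = 0). -/
open Real

private lemma key_aux (r : ℝ) (hr : r ∈ Set.Ioo (0:ℝ) 1) (a b : ℝ)
    (ha : 0 < a) (hb : |b| ≤ a) :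
    r * (a - b) * a ^ (r - 1) ≤ a ^ (r - 1) * a - |b| ^ (r - 1) * b := by
  obtain ⟨hr0, hr1⟩ := hr
  have hA : a ^ (r - 1) * a = a ^ r := by
    rw [Real.rpow_sub ha, Real.rpow_one, div_mul_cancel₀ _ ha.ne']
  have haR : (0:ℝ) < a ^ r := Real.rpow_pos_of_pos ha r
  have haR1 : (0:ℝ) < a ^ (r - 1) := Real.rpow_pos_of_pos ha _
  rcases le_or_gt 0 b with hb0 | hb0
  · -- b ≥ 0, so |b| = b
    rw [abs_of_nonneg hb0] at hb ⊢
    have hB : b ^ (r - 1) * b = b ^ r := by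
      rcases eq_or_lt_of_le hb0 with h0 | h0
      · rw [← h0, Real.zero_rpow (by linarith), Real.zero_rpow (by linarith)]; ring
      · rw [Real.rpow_sub h0, Real.rpow_one, div_mul_cancel₀ _ h0.ne']
    rw [hA, hB]
    -- Bernoulli: (b/a)^r ≤ 1 + r*(b/a - 1)
    have hber : (b / a) ^ r ≤ 1 + r * (b / a - 1) := by
      have hba : (0:ℝ) ≤ b / a := by positivity
      have h := rpow_one_add_le_one_add_mul_self (s := b / a - 1)
        (by linarith) hr0.le hr1.le (p := r)
      simpa using h
    rw [Real.div_rpow hb0 ha.le] at hber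
    have h2 := mul_le_mul_of_nonneg_right hber (le_of_lt (mul_pos haR ha))
    have hcancel : b ^ r / a ^ r * (a ^ r * a) = b ^ r * a := by
      rw [div_mul_eq_mul_div, ← mul_assoc, mul_comm (b ^ r) (a ^ r), mul_assoc,
        mul_div_assoc, mul_comm (a ^ r), div_mul_cancel₀ _ haR.ne']
    rw [hcancel] at h2
    -- h2 : b ^ r * a ≤ (1 + r * (b / a - 1)) * (a ^ r * a)
    have h3 : (1 + r * (b / a - 1)) * (a ^ r * a) = a ^ r * a + r * a ^ r * b - r * a ^ r * a := by
      field_simp; ring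
    rw [h3] at h2
    rw [← mul_le_mul_iff_left₀ ha]
    have hA2 : r * (a - b) * a ^ (r - 1) * a = r * (a - b) * a ^ r := by
      rw [mul_assoc, hA]
    rw [hA2]
    nlinarith [h2]
  · -- b < 0
    rw [abs_of_neg hb0] at hb ⊢
    have hbpos : 0 < -b := by linarith
    have hB : (-b) ^ (r - 1) * (-b) = (-b) ^ r := by
      rw [Real.rpow_sub hbpos, Real.rpow_one, div_mul_cancel₀ _ hbpos.ne']
    have hmono : a ^ (r - 1) ≤ (-b) ^ (r - 1) :=
      Real.rpow_le_rpow_of_nonpos hbpos hb (by linarith)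
    have hbR : (0:ℝ) < (-b) ^ r := Real.rpow_pos_of_pos hbpos r
    have e1 : (-b) ^ (r - 1) * b = -((-b) ^ r) := by rw [← hB]; ring
    rw [e1, hA]
    have t1 : r * a * a ^ (r - 1) ≤ a ^ r := by
      rw [mul_assoc, mul_comm a, hA]
      nlinarith
    have t2 : r * (-b) * a ^ (r - 1) ≤ (-b) ^ r := by
      calc r * (-b) * a ^ (r - 1) ≤ r * (-b) * (-b) ^ (r - 1) := by
            apply mul_le_mul_of_nonneg_left hmono (by positivity)
        _ = r * (-b) ^ r := by rw [mul_assoc, mul_comm (-b), hB]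
        _ ≤ (-b) ^ r := by nlinarith
    nlinarith [t1, t2]

private lemma key_sq (r : ℝ) (hr : r ∈ Set.Ioo (0:ℝ) 1) (a b : ℝ)
    (ha : 0 < a) (hb : |b| ≤ a) :
    r * (a - b) ^ 2 * a ^ (r - 1) ≤ (a - b) * (a ^ (r - 1) * a - |b| ^ (r - 1) * b) := by
  have hab : 0 ≤ a - b := by
    have := abs_le.mp hb
    linarith [this.2]
  have h := key_aux r hr a b ha hb
  calc r * (a - b) ^ 2 * a ^ (r - 1) = (a - b) * (r * (a - b) * a ^ (r - 1)) := by ring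
    _ ≤ (a - b) * (a ^ (r - 1) * a - |b| ^ (r - 1) * b) :=
        mul_le_mul_of_nonneg_left h hab

private lemma main_half (r : ℝ) (hr : r ∈ Set.Ioo (0:ℝ) 1) (s₁ s₂ : ℝ) (hmax : |s₂| ≤ |s₁|) :
    r * |s₁ - s₂| ^ 2 * (max |s₁| |s₂|) ^ (r - 1)
      ≤ (s₁ - s₂) * (|s₁| ^ (r - 1) * s₁ - |s₂| ^ (r - 1) * s₂) := by
  rw [max_eq_left hmax, sq_abs]
  rcases lt_trichotomy s₁ 0 with h1 | h1 | h1
  · have := key_sq r hr |s₁| (-s₂) (abs_pos.mpr h1.ne) (by rwa [abs_neg])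
    rw [abs_of_neg h1] at this ⊢
    rw [abs_neg] at this
    nlinarith [this]
  · have h2 : s₂ = 0 := by
      rw [h1] at hmax; simpa [abs_nonpos_iff] using hmax
    subst h1; subst h2
    simp
  · have := key_sq r hr |s₁| s₂ (abs_pos.mpr h1.ne') hmax
    rw [abs_of_pos h1] at this ⊢
    nlinarith [this]

theorem stmt_0 (r : ℝ) (hr : r ∈ Set.Ioo (0:ℝ) 1) (s₁ s₂ : ℝ) :
    r * |s₁ - s₂| ^ 2 * (max |s₁| |s₂|) ^ (r - 1)
      ≤ (s₁ - s₂) * (|s₁| ^ (r - 1) * s₁ - |s₂| ^ (r - 1) * s₂) := by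
  rcases le_total |s₂| |s₁| with h | h
  · exact main_half r hr s₁ s₂ h
  · have := main_half r hr s₂ s₁ h
    rw [abs_sub_comm, max_comm] at this
    nlinarith [this]
end

section
/- Let σ ≥ 2, (λᵢ) positive reals, (qᵢ) positive reals, c > 0, ε ∈ (0,1), and suppose qᵢ ≥ c·λᵢ^{(σ+2ε-2)/(2σ)} for all i. Then for every square-summable sequence (xᵢ), (∑ᵢ xᵢ² qᵢ^{-2})^{σ/2} ≤ c^{-σ}·(∑ᵢ xᵢ²/λᵢ)^{(σ-2)/2}·(∑ᵢ xᵢ² λᵢ^{-ε}), whenever all sums converge. -/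
open Real

theorem stmt_3 (σ c ε : ℝ) (hσ : 2 ≤ σ) (hc : 0 < c) (hε : ε ∈ Set.Ioo (0:ℝ) 1)
    (Λ q : ℕ → ℝ) (hΛ : ∀ i, 0 < Λ i) (hq : ∀ i, 0 < q i)
    (hlow : ∀ i, q i ≥ c * Λ i ^ ((σ + 2 * ε - 2) / (2 * σ)))
    (x : ℕ → ℝ)
    (hx : Summable fun i => x i ^ 2)
    (h1 : Summable fun i => x i ^ 2 / q i ^ 2)
    (h2 : Summable fun i => x i ^ 2 / Λ i)
    (h3 : Summable fun i => x i ^ 2 * Λ i ^ (-ε)) :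
    (∑' i, x i ^ 2 / q i ^ 2) ^ (σ / 2)
      ≤ c ^ (-σ) * (∑' i, x i ^ 2 / Λ i) ^ ((σ - 2) / 2)
        * (∑' i, x i ^ 2 * Λ i ^ (-ε)) := by
  obtain ⟨hε0, hε1⟩ := hε
  have hσ0 : (0:ℝ) < σ := by linarith
  set α : ℝ := (σ + 2 * ε - 2) / (2 * σ) with hα
  have hα0 : 0 < α := by
    apply div_pos <;> linarith
  -- pointwise bound : x²/q² ≤ c^{-2} x² Λ^{-2α}
  have hpt : ∀ i, x i ^ 2 / q i ^ 2 ≤ c ^ (-2:ℝ) * (x i ^ 2 * Λ i ^ (-(2*α))) := by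
    intro i
    have hΛi := hΛ i
    have hb : (0:ℝ) < c * Λ i ^ α := by positivity
    have hsq : (c * Λ i ^ α) ^ 2 ≤ q i ^ 2 := by
      apply pow_le_pow_left₀ hb.le (hlow i)
    have h1' : x i ^ 2 / q i ^ 2 ≤ x i ^ 2 / (c * Λ i ^ α) ^ 2 := by
      apply div_le_div_of_nonneg_left _ (by positivity) hsq
      · positivity
    refine h1'.trans_eq ?_
    rw [mul_pow, div_eq_mul_inv, mul_inv]
    rw [Real.rpow_neg hc.le, Real.rpow_two]
    rw [show Λ i ^ (-(2*α)) = (Λ i ^ α)⁻¹ ^ 2 by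
      rw [inv_pow, ← Real.rpow_natCast (Λ i ^ α) 2, ← Real.rpow_mul hΛi.le,
        ← Real.rpow_neg hΛi.le]
      norm_num [mul_comm]]
    ring
  have hS0 : 0 ≤ ∑' i, x i ^ 2 / q i ^ 2 :=
    tsum_nonneg fun i => by positivity
  have hA0 : 0 ≤ ∑' i, x i ^ 2 / Λ i :=
    tsum_nonneg fun i => by have := hΛ i; positivity
  have hB0 : 0 ≤ ∑' i, x i ^ 2 * Λ i ^ (-ε) :=
    tsum_nonneg fun i => by have := hΛ i; positivity
  rcases eq_or_lt_of_le hσ with hσ2 | hσ2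
  · -- σ = 2 case
    subst hσ2
    have hα' : α = ε / 2 := by rw [hα]; ring_nf
    have hle : (∑' i, x i ^ 2 / q i ^ 2) ≤ c ^ (-(2:ℝ)) * ∑' i, x i ^ 2 * Λ i ^ (-ε) := by
      rw [← tsum_mul_left]
      apply Summable.tsum_le_tsum _ h1 (h3.mul_left _)
      intro i
      have := hpt i
      rw [hα'] at this
      simpa [show -(2 * (ε/2)) = -ε by ring, mul_assoc] using this
    rw [show (2:ℝ)/2 = 1 by norm_num, show ((2:ℝ)-2)/2 = 0 by norm_num,
      Real.rpow_one, Real.rpow_zero, mul_one]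
    simpa using hle
  · -- σ > 2 case: Hölder
    set p : ℝ := σ / (σ - 2) with hp
    set p' : ℝ := σ / 2 with hp'
    have hσ2' : (0:ℝ) < σ - 2 := by linarith
    have hpq : p.HolderConjugate p' := by
      rw [Real.holderConjugate_iff]; constructor
      · rw [hp, lt_div_iff₀ hσ2']; linarith
      · rw [hp, hp']
        field_simp
        ring
    set f : ℕ → ℝ := fun i => |x i| ^ (2*(σ-2)/σ) * Λ i ^ (-((σ-2)/σ)) with hfdef
    set g : ℕ → ℝ := fun i => |x i| ^ (4/σ) * Λ i ^ (-(2*ε/σ)) with hgdef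
    have hf0 : ∀ i, 0 ≤ f i := fun i => by have := hΛ i; positivity
    have hg0 : ∀ i, 0 ≤ g i := fun i => by have := hΛ i; positivity
    have hfp : ∀ i, f i ^ p = x i ^ 2 / Λ i := by
      intro i
      have hΛi := (hΛ i).le
      rw [hfdef]
      rw [Real.mul_rpow (by positivity) (by positivity),
        ← Real.rpow_mul (abs_nonneg _), ← Real.rpow_mul hΛi,
        show 2*(σ-2)/σ * p = 2 by rw [hp]; field_simp,
        show -((σ-2)/σ) * p = -1 by rw [hp]; field_simp,
        Real.rpow_two, sq_abs, Real.rpow_neg_one, div_eq_mul_inv]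
    have hgp : ∀ i, g i ^ p' = x i ^ 2 * Λ i ^ (-ε) := by
      intro i
      have hΛi := (hΛ i).le
      rw [hgdef]
      rw [Real.mul_rpow (by positivity) (by positivity),
        ← Real.rpow_mul (abs_nonneg _), ← Real.rpow_mul hΛi,
        show 4/σ * p' = 2 by rw [hp']; field_simp; ring,
        show -(2*ε/σ) * p' = -ε by rw [hp']; field_simp,
        Real.rpow_two, sq_abs]
    have hfg : ∀ i, f i * g i = x i ^ 2 * Λ i ^ (-(2*α)) := by
      intro i
      have e1 : (2*(σ-2)/σ) + 4/σ = 2 := by field_simp; ring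
      have e2 : (-((σ-2)/σ)) + (-(2*ε/σ)) = -(2*α) := by
        rw [hα]; field_simp; ring
      rw [hfdef, hgdef, mul_mul_mul_comm,
        ← Real.rpow_add' (abs_nonneg _) (by rw [e1]; norm_num),
        ← Real.rpow_add (hΛ i), e1, e2, Real.rpow_two, sq_abs]
    have hf_sum : Summable fun i => f i ^ p := h2.congr fun i => (hfp i).symm
    have hg_sum : Summable fun i => g i ^ p' := h3.congr fun i => (hgp i).symm
    have hfg_sum : Summable fun i => f i * g i :=
      summable_mul_of_Lp_Lq_of_nonneg hpq hf0 hg0 hf_sum hg_sum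
    have hholder := inner_le_Lp_mul_Lq_tsum_of_nonneg hpq hf0 hg0 hf_sum hg_sum
    rw [tsum_congr hfp, tsum_congr hgp] at hholder
    have hle : (∑' i, x i ^ 2 / q i ^ 2)
        ≤ c ^ (-2:ℝ) * ((∑' i, x i ^ 2 / Λ i) ^ (1/p)
            * (∑' i, x i ^ 2 * Λ i ^ (-ε)) ^ (1/p')) := by
      calc (∑' i, x i ^ 2 / q i ^ 2)
          ≤ ∑' i, c ^ (-2:ℝ) * (f i * g i) := by
            apply Summable.tsum_le_tsum _ h1 (hfg_sum.mul_left _)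
            intro i; rw [hfg]; exact hpt i
        _ = c ^ (-2:ℝ) * ∑' i, f i * g i := tsum_mul_left
        _ ≤ _ := by
            apply mul_le_mul_of_nonneg_left hholder (by positivity)
    have key := Real.rpow_le_rpow hS0 hle (by positivity : (0:ℝ) ≤ σ/2)
    refine key.trans_eq ?_
    rw [Real.mul_rpow (by positivity) (by positivity),
      Real.mul_rpow (by positivity) (by positivity),
      ← Real.rpow_mul hc.le, ← Real.rpow_mul hA0, ← Real.rpow_mul hB0,
      show (-2:ℝ) * (σ/2) = -σ by ring,
      show 1/p * (σ/2) = (σ-2)/2 by rw [hp]; field_simp,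
      show 1/p' * (σ/2) = 1 by rw [hp']; field_simp,
      Real.rpow_one, mul_assoc]
end

section
/- Let σ ≥ 2, let Q : ℓ² → ℓ² be the diagonal operator Q eᵢ = qᵢ eᵢ with qᵢ > 0, let λᵢ > 0, and define ‖x‖_H² := ∑ xᵢ²/λᵢ, ‖x‖_Q := ‖Q^{-1}x‖_{ℓ²}. Suppose there are c, c₁ > 0 and ε ∈ (0,1) with qᵢ ≥ c λᵢ^{(σ+2ε-2)/(2σ)} and ‖x‖_{r+1}² ≥ c₁ ∑ xᵢ² λᵢ^{-ε} for all x. Then there exists ξ > 0 such that ‖x‖_{r+1}² · ‖x‖_H^{σ-2} ≥ ξ ‖x‖_Q^{σ} for all x. -/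
open Real

theorem stmt_14 (σ c c₁ ε : ℝ) (hσ : 2 ≤ σ) (hc : 0 < c) (hc₁ : 0 < c₁)
    (hε : ε ∈ Set.Ioo (0:ℝ) 1)
    (Λ q : ℕ → ℝ) (hΛ : ∀ i, 0 < Λ i) (hq : ∀ i, 0 < q i)
    (hqlow : ∀ i, q i ≥ c * Λ i ^ ((σ + 2 * ε - 2) / (2 * σ)))
    (N : (ℕ → ℝ) → ℝ) (hN0 : ∀ x, 0 ≤ N x)
    (hNash : ∀ x : ℕ → ℝ, Summable (fun i => x i ^ 2 * Λ i ^ (-ε)) →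
      N x ^ 2 ≥ c₁ * ∑' i, x i ^ 2 * Λ i ^ (-ε)) :
    ∃ ξ : ℝ, 0 < ξ ∧ ∀ x : ℕ → ℝ,
      Summable (fun i => x i ^ 2 / q i ^ 2) →
      Summable (fun i => x i ^ 2 / Λ i) →
      Summable (fun i => x i ^ 2 * Λ i ^ (-ε)) →
      Summable (fun i => x i ^ 2 * Λ i ^ ((σ - 2) / 2) / q i ^ σ) →
      N x ^ 2 * (∑' i, x i ^ 2 / Λ i) ^ ((σ - 2) / 2)
        ≥ ξ * (∑' i, x i ^ 2 / q i ^ 2) ^ (σ / 2) := by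
  obtain ⟨hε0, hε1⟩ := hε
  have hσ0 : (0:ℝ) < σ := by linarith
  have hcσ : (0:ℝ) < c ^ σ := Real.rpow_pos_of_pos hc σ
  refine ⟨c₁ * c ^ σ, by positivity, fun x hsq hsΛ hsε hsb => ?_⟩
  -- lower bound on q i ^ σ
  have hqσ : ∀ i, c ^ σ * Λ i ^ ((σ + 2 * ε - 2) / 2) ≤ q i ^ σ := by
    intro i
    have hΛi := hΛ i
    have hqi := hq i
    have h1 : (c * Λ i ^ ((σ + 2 * ε - 2) / (2 * σ))) ^ σ ≤ q i ^ σ :=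
      Real.rpow_le_rpow (by positivity) (hqlow i) hσ0.le
    calc c ^ σ * Λ i ^ ((σ + 2 * ε - 2) / 2)
        = (c * Λ i ^ ((σ + 2 * ε - 2) / (2 * σ))) ^ σ := by
          rw [Real.mul_rpow hc.le (Real.rpow_nonneg hΛi.le _),
            ← Real.rpow_mul hΛi.le]
          congr 2
          field_simp
      _ ≤ q i ^ σ := h1
  -- pointwise bound on the b-series
  have hbpt : ∀ i, x i ^ 2 * Λ i ^ ((σ - 2) / 2) / q i ^ σ
      ≤ (c ^ σ)⁻¹ * (x i ^ 2 * Λ i ^ (-ε)) := by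
    intro i
    have hΛi := hΛ i
    have hqi := hq i
    have hqpos : (0:ℝ) < q i ^ σ := Real.rpow_pos_of_pos hqi σ
    have hpos : (0:ℝ) < c ^ σ * Λ i ^ ((σ + 2 * ε - 2) / 2) := by positivity
    have h2 : x i ^ 2 * Λ i ^ ((σ - 2) / 2) / q i ^ σ
        ≤ x i ^ 2 * Λ i ^ ((σ - 2) / 2) / (c ^ σ * Λ i ^ ((σ + 2 * ε - 2) / 2)) := by
      gcongr
      exact hqσ i
    refine h2.trans_eq ?_
    have h3 : Λ i ^ ((σ - 2) / 2) / Λ i ^ ((σ + 2 * ε - 2) / 2) = Λ i ^ (-ε) := by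
      rw [← Real.rpow_sub hΛi]
      congr 1; ring
    rw [← h3]
    have hne : Λ i ^ ((σ + 2 * ε - 2) / 2) ≠ 0 := by positivity
    field_simp
  -- sum bound on the b-series
  have hbsum : ∑' i, x i ^ 2 * Λ i ^ ((σ - 2) / 2) / q i ^ σ
      ≤ (c ^ σ)⁻¹ * ∑' i, x i ^ 2 * Λ i ^ (-ε) := by
    rw [← tsum_mul_left]
    exact Summable.tsum_le_tsum hbpt hsb (hsε.mul_left _)
  -- Nash bound
  have hNb : c₁ * ∑' i, x i ^ 2 * Λ i ^ (-ε) ≤ N x ^ 2 := hNash x hsε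
  have hεnn : (0:ℝ) ≤ ∑' i, x i ^ 2 * Λ i ^ (-ε) :=
    tsum_nonneg fun i => mul_nonneg (sq_nonneg _) (Real.rpow_nonneg (hΛ i).le _)
  have hbnn : (0:ℝ) ≤ ∑' i, x i ^ 2 * Λ i ^ ((σ - 2) / 2) / q i ^ σ :=
    tsum_nonneg fun i => div_nonneg
      (mul_nonneg (sq_nonneg _) (Real.rpow_nonneg (hΛ i).le _))
      (Real.rpow_nonneg (hq i).le _)
  have hΛnn : (0:ℝ) ≤ ∑' i, x i ^ 2 / Λ i :=
    tsum_nonneg fun i => div_nonneg (sq_nonneg _) (hΛ i).le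
  have hqnn : (0:ℝ) ≤ ∑' i, x i ^ 2 / q i ^ 2 :=
    tsum_nonneg fun i => div_nonneg (sq_nonneg _) (by have := hq i; positivity)
  -- Hölder step
  have hHolder : (∑' i, x i ^ 2 / q i ^ 2) ^ (σ / 2)
      ≤ (∑' i, x i ^ 2 / Λ i) ^ ((σ - 2) / 2)
        * ∑' i, x i ^ 2 * Λ i ^ ((σ - 2) / 2) / q i ^ σ := by
    rcases eq_or_lt_of_le hσ with hσ2 | hσ2
    · -- σ = 2
      subst hσ2
      norm_num
    · -- σ > 2
      have hσ2' : (0:ℝ) < σ - 2 := by linarith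
      set s : ℝ := (σ - 2) / σ with hs_def
      set t : ℝ := 2 / σ with ht_def
      have hs0 : 0 ≤ s := by positivity
      have ht0 : 0 ≤ t := by positivity
      have hst : s + t = 1 := by rw [hs_def, ht_def]; field_simp; ring
      set f : ℕ → ℝ := fun i => (x i ^ 2 / Λ i) ^ s with hf_def
      set g : ℕ → ℝ := fun i => (x i ^ 2 * Λ i ^ ((σ - 2) / 2) / q i ^ σ) ^ t with hg_def
      have hpq : Real.HolderConjugate (σ / (σ - 2)) (σ / 2) := by
        rw [Real.holderConjugate_iff]; constructor
        · rw [lt_div_iff₀ hσ2']; linarith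
        · field_simp; ring
      have hfp : ∀ i, f i ^ (σ / (σ - 2)) = x i ^ 2 / Λ i := by
        intro i
        show ((x i ^ 2 / Λ i) ^ s) ^ (σ / (σ - 2)) = x i ^ 2 / Λ i
        have hb : (0:ℝ) ≤ x i ^ 2 / Λ i := div_nonneg (sq_nonneg _) (hΛ i).le
        rw [← Real.rpow_mul hb,
          show s * (σ / (σ - 2)) = 1 by rw [hs_def]; field_simp, Real.rpow_one]
      have hgp : ∀ i, g i ^ (σ / 2) = x i ^ 2 * Λ i ^ ((σ - 2) / 2) / q i ^ σ := by
        intro i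
        show ((x i ^ 2 * Λ i ^ ((σ - 2) / 2) / q i ^ σ) ^ t) ^ (σ / 2)
          = x i ^ 2 * Λ i ^ ((σ - 2) / 2) / q i ^ σ
        have hb : (0:ℝ) ≤ x i ^ 2 * Λ i ^ ((σ - 2) / 2) / q i ^ σ := div_nonneg
          (mul_nonneg (sq_nonneg _) (Real.rpow_nonneg (hΛ i).le _))
          (Real.rpow_nonneg (hq i).le _)
        rw [← Real.rpow_mul hb,
          show t * (σ / 2) = 1 by rw [ht_def]; field_simp, Real.rpow_one]
      have hfg : ∀ i, f i * g i = x i ^ 2 / q i ^ 2 := by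
        intro i
        have hΛi := hΛ i
        have hqi := hq i
        have hu : (0:ℝ) ≤ x i ^ 2 := sq_nonneg _
        have e1 : f i = (x i ^ 2) ^ s / Λ i ^ s := by
          show (x i ^ 2 / Λ i) ^ s = (x i ^ 2) ^ s / Λ i ^ s
          exact Real.div_rpow hu hΛi.le s
        have e2 : g i = (x i ^ 2) ^ t * (Λ i ^ ((σ - 2) / 2)) ^ t / (q i ^ σ) ^ t := by
          show (x i ^ 2 * Λ i ^ ((σ - 2) / 2) / q i ^ σ) ^ t = _
          rw [Real.div_rpow (mul_nonneg hu (Real.rpow_nonneg hΛi.le _))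
            (Real.rpow_nonneg hqi.le _), Real.mul_rpow hu (Real.rpow_nonneg hΛi.le _)]
        have e3 : (x i ^ 2) ^ s * (x i ^ 2) ^ t = x i ^ 2 := by
          rw [← Real.rpow_add_of_nonneg hu hs0 ht0, hst, Real.rpow_one]
        have e4 : (Λ i ^ ((σ - 2) / 2)) ^ t / Λ i ^ s = 1 := by
          rw [← Real.rpow_mul hΛi.le, ← Real.rpow_sub hΛi,
            show (σ - 2) / 2 * t - s = 0 by rw [ht_def, hs_def]; field_simp; ring,
            Real.rpow_zero]
        have e5 : (q i ^ σ) ^ t = q i ^ 2 := by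
          rw [← Real.rpow_mul hqi.le, show σ * t = 2 by rw [ht_def]; field_simp,
            ← Real.rpow_natCast (q i) 2]
          norm_num
        calc f i * g i
            = ((x i ^ 2) ^ s * (x i ^ 2) ^ t) * ((Λ i ^ ((σ - 2) / 2)) ^ t / Λ i ^ s)
              / (q i ^ σ) ^ t := by rw [e1, e2]; ring
          _ = x i ^ 2 / q i ^ 2 := by rw [e3, e4, e5, mul_one]
      have hfsum : Summable fun i => f i ^ (σ / (σ - 2)) := by
        simpa only [hfp] using hsΛ
      have hgsum : Summable fun i => g i ^ (σ / 2) := by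
        simpa only [hgp] using hsb
      have hH := Real.inner_le_Lp_mul_Lq_tsum_of_nonneg (f := f) (g := g) hpq
        (fun i => Real.rpow_nonneg (div_nonneg (sq_nonneg _) (hΛ i).le) _)
        (fun i => Real.rpow_nonneg (div_nonneg
          (mul_nonneg (sq_nonneg _) (Real.rpow_nonneg (hΛ i).le _))
          (Real.rpow_nonneg (hq i).le _)) _) hfsum hgsum
      simp only [hfp, hgp, hfg] at hH
      have h1p : 1 / (σ / (σ - 2)) = (σ - 2) / σ := by field_simp
      have h1q : 1 / (σ / 2) = 2 / σ := by field_simp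
      rw [h1p, h1q] at hH
      -- raise to the power σ/2
      have hraise := Real.rpow_le_rpow hqnn hH (by positivity : (0:ℝ) ≤ σ / 2)
      rw [Real.mul_rpow (Real.rpow_nonneg hΛnn _) (Real.rpow_nonneg hbnn _),
        ← Real.rpow_mul hΛnn, ← Real.rpow_mul hbnn,
        show (σ - 2) / σ * (σ / 2) = (σ - 2) / 2 by
          rw [div_mul_div_comm, mul_comm σ 2, mul_div_mul_right _ _ (ne_of_gt hσ0)],
        show 2 / σ * (σ / 2) = 1 by
          rw [div_mul_div_comm, mul_comm 2 σ, div_self (by positivity)],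
        Real.rpow_one] at hraise
      exact hraise
  -- combine
  calc c₁ * c ^ σ * (∑' i, x i ^ 2 / q i ^ 2) ^ (σ / 2)
      ≤ c₁ * c ^ σ * ((∑' i, x i ^ 2 / Λ i) ^ ((σ - 2) / 2)
          * ∑' i, x i ^ 2 * Λ i ^ ((σ - 2) / 2) / q i ^ σ) := by
        apply mul_le_mul_of_nonneg_left hHolder (by positivity)
    _ ≤ c₁ * c ^ σ * ((∑' i, x i ^ 2 / Λ i) ^ ((σ - 2) / 2)
          * ((c ^ σ)⁻¹ * ∑' i, x i ^ 2 * Λ i ^ (-ε))) := by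
        apply mul_le_mul_of_nonneg_left _ (by positivity)
        exact mul_le_mul_of_nonneg_left hbsum (Real.rpow_nonneg hΛnn _)
    _ = (c₁ * ∑' i, x i ^ 2 * Λ i ^ (-ε)) * (∑' i, x i ^ 2 / Λ i) ^ ((σ - 2) / 2) := by
        field_simp
    _ ≤ N x ^ 2 * (∑' i, x i ^ 2 / Λ i) ^ ((σ - 2) / 2) :=
        mul_le_mul_of_nonneg_right hNb (Real.rpow_nonneg hΛnn _)
end
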